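/- Let l ≥ 1 and let ψ = (ψ_0,…,ψ_{l-1}) be a tuple of polynomials in k[x_1,…,x_r]. Then for every 0 ≤ j ≤ l−1, one has the identity ∑_{a=j}^{l−1} ((−1)^{a+j}/(a−j)!) · (a! · C(2l−1,a)^{−1} · f_{a,r,l,F_ψ}) = π_j^ψ in k[{g_{ij}}_{1≤i<j≤r+1}]. -/

import Mathlib

open MvPolynomial Finset

/-- Index type for the strictly upper-triangular entries `g_{ij}`, `1 ≤ i < j ≤ r+1`. -/
abbrev UTIdx (r : ℕ) := {p : Fin (r + 1) × Fin (r + 1) // p.1 < p.2}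

/-- The coordinate ring `k[{g_{ij}}_{1 ≤ i < j ≤ r+1}]` of the unipotent
upper-triangular group `U_{r+1}`. -/
abbrev URing (k : Type) [CommSemiring k] (r : ℕ) := MvPolynomial (UTIdx r) k

/-- The generic unipotent upper-triangular matrix: indeterminate entries `g_{ij}` for `i < j`,
`1` on the diagonal, `0` below the diagonal. -/
noncomputable def genMat (k : Type) [CommRing k] (r : ℕ) :
    Matrix (Fin (r + 1)) (Fin (r + 1)) (URing k r) :=
  Matrix.of fun i j => if h : i < j then X ⟨(i, j), h⟩ else if i = j then 1 else 0

/-- Action of a matrix on polynomials via `g · xᵢ = ∑ⱼ gⱼᵢ xⱼ`. -/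
noncomputable def glAct {R : Type*} [CommSemiring R] {n : ℕ}
    (g : Matrix (Fin n) (Fin n) R) (p : MvPolynomial (Fin n) R) : MvPolynomial (Fin n) R :=
  aeval (fun i => ∑ j, MvPolynomial.C (g j i) * X j) p

/-- A polynomial in `k[x₁,…,xᵣ]`, viewed in `(URing k r)[x₁,…,x_{r+1}]`. -/
noncomputable def emb (k : Type) [CommRing k] (r : ℕ) (p : MvPolynomial (Fin r) k) :
    MvPolynomial (Fin (r + 1)) (URing k r) :=
  MvPolynomial.map (algebraMap k (URing k r)) (rename Fin.castSucc p)

/-- The first wedge factor `∑_{i=0}^{2l-1} x_{r+1}^i x₁^{2l-i} F_i` of `v_d^r(F)`. -/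
noncomputable def vP (k : Type) [CommRing k] (r l : ℕ) (F : ℕ → MvPolynomial (Fin r) k) :
    MvPolynomial (Fin (r + 1)) (URing k r) :=
  ∑ i ∈ range (2 * l), X (Fin.last r) ^ i * X 0 ^ (2 * l - i) * emb k r (F i)

/-- The second wedge factor `∑_{i=0}^{2l-1} x_{r+1}^{i+1} x₁^{2l-i-1} F_i` of `v_d^r(F)`. -/
noncomputable def vQ (k : Type) [CommRing k] (r l : ℕ) (F : ℕ → MvPolynomial (Fin r) k) :
    MvPolynomial (Fin (r + 1)) (URing k r) :=
  ∑ i ∈ range (2 * l), X (Fin.last r) ^ (i + 1) * X 0 ^ (2 * l - i - 1) * emb k r (F i)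

/-- The monomial `x₁^{2l+d-a} x_{r+1}^{a}`. -/
noncomputable def mUp (r l d a : ℕ) : Fin (r + 1) →₀ ℕ :=
  Finsupp.single 0 (2 * l + d - a) + Finsupp.single (Fin.last r) a

/-- The monomial `x₁^{d+a} x_{r+1}^{2l-a}`. -/
noncomputable def mDown (r l d a : ℕ) : Fin (r + 1) →₀ ℕ :=
  Finsupp.single 0 (d + a) + Finsupp.single (Fin.last r) (2 * l - a)

/-- `θ((g·v_d^r(F))_{x₁^{2l+d-a}x_{r+1}^a ∧ x₁^{d+a}x_{r+1}^{2l-a}})`: the coordinate of the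
transform of `v_d^r(F)` by the generic unipotent upper-triangular matrix at the indicated
basis element of the exterior square, a polynomial in the variables `g_{ij}`. -/
noncomputable def thetaCoord (k : Type) [CommRing k] (r l d : ℕ)
    (F : ℕ → MvPolynomial (Fin r) k) (a : ℕ) : URing k r :=
  coeff (mUp r l d a) (glAct (genMat k r) (vP k r l F)) *
      coeff (mDown r l d a) (glAct (genMat k r) (vQ k r l F)) -
    coeff (mDown r l d a) (glAct (genMat k r) (vP k r l F)) *
      coeff (mUp r l d a) (glAct (genMat k r) (vQ k r l F))

/-- The variable `g_{1,r+1}`. -/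
noncomputable def gTop (k : Type) [CommRing k] (r : ℕ) : URing k r :=
  genMat k r 0 (Fin.last r)

/-- `p̃ = p(1, g_{12}, …, g_{1r})`. -/
noncomputable def tilde (k : Type) [CommRing k] (r : ℕ) (p : MvPolynomial (Fin r) k) :
    URing k r :=
  aeval (fun j : Fin r => genMat k r 0 (Fin.castSucc j)) p

/-- The polynomial `f_{a,r,l,F} ∈ k[{g_{ij}}]`.  (Summands whose exponent of `g_{1,r+1}`
would be negative carry a vanishing binomial coefficient, so truncated subtraction in the
exponent gives the same element.) -/
noncomputable def fA (k : Type) [CommRing k] (r l : ℕ)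
    (F : ℕ → MvPolynomial (Fin r) k) (a : ℕ) : URing k r :=
  (∑ i ∈ range (2 * l), ∑ j ∈ range (2 * l),
      if i < j then
        tilde k r (F i) * tilde k r (F j) * gTop k r ^ (i + j + 1 - 2 * l) *
          ((i.choose a * j.choose (2 * l - a - 1) +
              i.choose (2 * l - a - 1) * j.choose a : ℕ) : URing k r)
      else 0) +
    ∑ i ∈ range (2 * l),
      tilde k r (F i) ^ 2 * gTop k r ^ (2 * i + 1 - 2 * l) *
        ((i.choose a * i.choose (2 * l - a - 1) : ℕ) : URing k r)

/-- The tuple `F_ψ`: `(F_ψ)_i = ψ_i/i!` for `0 ≤ i ≤ l−1`, `(F_ψ)_i = 0` for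
`l ≤ i ≤ 2l−2`, and `(F_ψ)_{2l−1} = 1`. -/
noncomputable def Fpsi (k : Type) [Field k] (r l : ℕ) (ψ : ℕ → MvPolynomial (Fin r) k) :
    ℕ → MvPolynomial (Fin r) k :=
  fun i => if i < l then ((i.factorial : k)⁻¹) • ψ i else if i = 2 * l - 1 then 1 else 0

/-- The polynomial `π_j^ψ ∈ k[{g_{ij}}]`. -/
noncomputable def piPsi (k : Type) [Field k] (r l : ℕ)
    (ψ : ℕ → MvPolynomial (Fin r) k) (j : ℕ) : URing k r :=
  MvPolynomial.C ((((2 * l - 1).factorial : k) / ((2 * l - 1 - j).factorial : k)) *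
      ∑ a ∈ range (l - j), ((2 * l - 1 - j).choose a : k) * (-1 : k) ^ a) *
      gTop k r ^ (2 * l - 1) +
    tilde k r (ψ j) * gTop k r ^ j

-- basic helper lemmas test
section Helpers
variable {k : Type} [Field k]

lemma tilde_zero (r : ℕ) : tilde k r 0 = 0 := map_zero _
lemma tilde_one (r : ℕ) : tilde k r 1 = 1 := map_one _
lemma tilde_smul (r : ℕ) (c : k) (p : MvPolynomial (Fin r) k) :
    tilde k r (c • p) = MvPolynomial.C c * tilde k r p := by
  unfold tilde
  rw [map_smul, Algebra.smul_def]
  rfl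

lemma fact_choose_nat {n j b : ℕ} (h : j + b ≤ n) :
    (j+b).factorial * (n.choose (j+b)) * (n - j).factorial =
      n.factorial * ((n-j).choose b) * b.factorial := by
  have h1 := Nat.choose_mul_factorial_mul_factorial h
  have h2 : b ≤ n - j := by omega
  have h3 := Nat.choose_mul_factorial_mul_factorial h2
  have e : n - (j+b) = n - j - b := by omega
  apply Nat.eq_of_mul_eq_mul_right (Nat.factorial_pos (n-j-b))
  calc (j+b).factorial * (n.choose (j+b)) * (n - j).factorial * (n-j-b).factorial
      = (n-j).factorial * (n.choose (j+b) * (j+b).factorial * (n-(j+b)).factorial) := by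
        rw [e]; ring
    _ = (n-j).factorial * n.factorial := by rw [h1]
    _ = n.factorial * ((n-j).choose b * b.factorial * (n-j-b).factorial) := by rw [h3]; ring
    _ = n.factorial * ((n-j).choose b) * b.factorial * (n-j-b).factorial := by ring

end Helpers

section FA
variable {k : Type} [Field k]

lemma natCast_C (r : ℕ) (n : ℕ) :
    ((n : ℕ) : URing k r) = MvPolynomial.C ((n : k)) := (map_natCast MvPolynomial.C n).symm

lemma Fpsi_last (r l : ℕ) (hl : 1 ≤ l) (ψ : ℕ → MvPolynomial (Fin r) k) :
    Fpsi k r l ψ (2*l-1) = 1 := by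
  unfold Fpsi; rw [if_neg (by omega), if_pos rfl]

lemma Fpsi_mid (r l i : ℕ) (hi : l ≤ i) (hne : i ≠ 2*l-1) (ψ : ℕ → MvPolynomial (Fin r) k) :
    Fpsi k r l ψ i = 0 := by
  unfold Fpsi; rw [if_neg (by omega), if_neg hne]

lemma Fpsi_lt (r l i : ℕ) (hi : i < l) (ψ : ℕ → MvPolynomial (Fin r) k) :
    Fpsi k r l ψ i = ((i.factorial : k)⁻¹) • ψ i := by
  unfold Fpsi; rw [if_pos hi]

lemma fA_Fpsi (r l : ℕ) (hl : 1 ≤ l) (ψ : ℕ → MvPolynomial (Fin r) k)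
    (a : ℕ) (ha : a < l) :
    fA k r l (Fpsi k r l ψ) a =
      MvPolynomial.C ((((2*l-1).choose a : k))^2) * gTop k r ^ (2*l-1) +
      ∑ i ∈ range l, MvPolynomial.C (((2*l-1).choose a : k) * (i.choose a : k) *
        ((i.factorial : k))⁻¹) * tilde k r (ψ i) * gTop k r ^ i := by
  have hm : 2*l - 1 ∈ range (2*l) := by simp; omega
  unfold fA
  rw [add_comm]
  congr 1
  · -- diagonal sum
    rw [Finset.sum_eq_single_of_mem _ hm]
    · rw [Fpsi_last r l hl, tilde_one,
        show 2*(2*l-1)+1-2*l = 2*l-1 by omega,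
        show 2*l-a-1 = 2*l-1-a by omega,
        Nat.choose_symm (by omega : a ≤ 2*l-1), natCast_C, Nat.cast_mul]
      simp only [map_mul, map_pow]
      ring
    · intro b hb hbne
      rcases lt_or_ge b l with h | h
      · rw [Nat.choose_eq_zero_of_lt (show b < 2*l-a-1 by omega)]
        simp
      · rw [Fpsi_mid r l b h hbne, tilde_zero]
        simp
  · -- double sum
    have step1 : ∀ i ∈ range (2*l),
        (∑ j' ∈ range (2*l), if i < j' then
          tilde k r (Fpsi k r l ψ i) * tilde k r (Fpsi k r l ψ j') *
            gTop k r ^ (i + j' + 1 - 2 * l) *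
            ((i.choose a * j'.choose (2 * l - a - 1) +
                i.choose (2 * l - a - 1) * j'.choose a : ℕ) : URing k r)
          else 0)
        = (if i < 2*l-1 then
            tilde k r (Fpsi k r l ψ i) * tilde k r (Fpsi k r l ψ (2*l-1)) *
              gTop k r ^ (i + (2*l-1) + 1 - 2 * l) *
              ((i.choose a * (2*l-1).choose (2 * l - a - 1) +
                  i.choose (2 * l - a - 1) * (2*l-1).choose a : ℕ) : URing k r)
            else 0) := by
      intro i hi
      refine Finset.sum_eq_single_of_mem _ hm fun b hb hbne => ?_
      rcases lt_or_ge b l with h | h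
      · split_ifs with hib
        · rw [Nat.choose_eq_zero_of_lt (show b < 2*l-a-1 by omega),
            Nat.choose_eq_zero_of_lt (show i < 2*l-a-1 by omega)]
          simp
        · rfl
      · rw [Fpsi_mid r l b h hbne, tilde_zero]
        simp
    rw [Finset.sum_congr rfl step1,
      ← Finset.sum_subset (Finset.range_subset_range.mpr (by omega : l ≤ 2*l))]
    · refine Finset.sum_congr rfl fun i hi => ?_
      rw [Finset.mem_range] at hi
      rw [if_pos (by omega : i < 2*l-1), Fpsi_last r l hl, tilde_one,
        Fpsi_lt r l i hi, tilde_smul,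
        show i + (2*l-1) + 1 - 2*l = i by omega,
        Nat.choose_eq_zero_of_lt (show i < 2*l-a-1 by omega),
        show 2*l-a-1 = 2*l-1-a by omega,
        Nat.choose_symm (by omega : a ≤ 2*l-1), Nat.zero_mul, Nat.add_zero,
        natCast_C, Nat.cast_mul]
      simp only [map_mul]
      ring
    · intro i hi hni
      rw [Finset.mem_range] at hi hni
      split_ifs with hib
      · rw [Fpsi_mid r l i (by omega) (by omega), tilde_zero]
        simp
      · rfl

end FA

section Scalar
variable {k : Type} [Field k] [CharZero k]

lemma K1 (l j : ℕ) (hl : 1 ≤ l) (hj : j ≤ l - 1) :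
    ∑ a ∈ Finset.Icc j (l-1), ((-1:k)^(a+j) * ((a-j).factorial : k)⁻¹ * (a.factorial : k) *
        ((2*l-1).choose a : k)⁻¹ * (((2*l-1).choose a : k))^2)
      = (((2 * l - 1).factorial : k) / ((2 * l - 1 - j).factorial : k)) *
        ∑ a ∈ range (l - j), ((2 * l - 1 - j).choose a : k) * (-1 : k) ^ a := by
  rw [← Finset.Ico_add_one_right_eq_Icc, show l-1+1 = l by omega, Finset.sum_Ico_eq_sum_range, Finset.mul_sum]
  refine Finset.sum_congr rfl fun b hb => ?_
  rw [Finset.mem_range] at hb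
  have hle : j + b ≤ 2*l-1 := by omega
  have hcast := congrArg (Nat.cast : ℕ → k) (fact_choose_nat hle)
  push_cast at hcast
  have h1 : ((2*l-1).choose (j+b) : k) ≠ 0 :=
    Nat.cast_ne_zero.mpr (Nat.choose_pos hle).ne'
  have h2 : ((b).factorial : k) ≠ 0 := Nat.cast_ne_zero.mpr (Nat.factorial_pos b).ne'
  have h3 : ((2*l-1-j).factorial : k) ≠ 0 := Nat.cast_ne_zero.mpr (Nat.factorial_pos _).ne'
  have hsgn : (-1:k)^(j+b+j) = (-1)^b := by
    rw [show j+b+j = b + 2*j by omega, pow_add, pow_mul, neg_one_sq, one_pow, mul_one]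
  rw [hsgn, show j+b-j = b by omega]
  field_simp
  linear_combination hcast

lemma K2 (l j i : ℕ) (hl : 1 ≤ l) (hj : j ≤ l-1) (hi : i < l) :
    ∑ a ∈ Finset.Icc j (l-1), ((-1:k)^(a+j) * ((a-j).factorial : k)⁻¹ * (a.factorial : k) *
        ((2*l-1).choose a : k)⁻¹ *
        (((2*l-1).choose a : k) * (i.choose a : k) * ((i.factorial : k))⁻¹))
      = if i = j then 1 else 0 := by
  rcases lt_or_ge i j with h | h
  · rw [if_neg (by omega)]
    refine Finset.sum_eq_zero fun a ha => ?_
    rw [Finset.mem_Icc] at ha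
    rw [Nat.choose_eq_zero_of_lt (by omega : i < a)]
    push_cast
    ring
  · rw [← Finset.sum_subset (Finset.Icc_subset_Icc_right (by omega : i ≤ l-1))]
    · rw [← Finset.Ico_add_one_right_eq_Icc, Finset.sum_Ico_eq_sum_range, show i+1-j = i-j+1 by omega]
      have key : ∀ b ∈ range (i-j+1),
          ((-1:k)^(j+b+j) * ((j+b-j).factorial : k)⁻¹ * ((j+b).factorial : k) *
            ((2*l-1).choose (j+b) : k)⁻¹ *
            (((2*l-1).choose (j+b) : k) * (i.choose (j+b) : k) * ((i.factorial : k))⁻¹))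
            = ((i-j).factorial : k)⁻¹ * ((-1:k)^b * ((i-j).choose b : k)) := by
        intro b hb
        rw [Finset.mem_range] at hb
        have hbij : j + b ≤ i := by omega
        have hcast := congrArg (Nat.cast : ℕ → k) (fact_choose_nat hbij)
        push_cast at hcast
        have h1 : ((2*l-1).choose (j+b) : k) ≠ 0 :=
          Nat.cast_ne_zero.mpr (Nat.choose_pos (by omega)).ne'
        have h2 : ((b).factorial : k) ≠ 0 := Nat.cast_ne_zero.mpr (Nat.factorial_pos b).ne'
        have h3 : ((i-j).factorial : k) ≠ 0 := Nat.cast_ne_zero.mpr (Nat.factorial_pos _).ne'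
        have h4 : ((i).factorial : k) ≠ 0 := Nat.cast_ne_zero.mpr (Nat.factorial_pos _).ne'
        have hsgn : (-1:k)^(j+b+j) = (-1)^b := by
          rw [show j+b+j = b + 2*j by omega, pow_add, pow_mul, neg_one_sq, one_pow, mul_one]
        rw [hsgn, show j+b-j = b by omega]
        field_simp
        linear_combination hcast
      rw [Finset.sum_congr rfl key, ← Finset.mul_sum]
      have halt : ((∑ b ∈ range (i-j+1), (-1:ℤ)^b * ((i-j).choose b) : ℤ) : k)
          = ((if i-j = 0 then 1 else 0 : ℤ) : k) := by
        rw [Int.alternating_sum_range_choose]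
      push_cast at halt
      rw [halt]
      rcases eq_or_ne i j with rfl | hne
      · simp
      · rw [if_neg (by omega), if_neg hne, mul_zero]
    · intro a ha hna
      rw [Finset.mem_Icc] at ha
      rw [Finset.mem_Icc] at hna
      rw [Nat.choose_eq_zero_of_lt (by omega : i < a)]
      push_cast
      ring

end Scalar

/-- **Lemma 3.4, proof identity.** For `0 ≤ j ≤ l−1`:
`∑_{a=j}^{l−1} ((−1)^{a+j}/(a−j)!)·(a!·C(2l−1,a)⁻¹·f_{a,r,l,F_ψ}) = π_j^ψ`. -/
theorem stmt5 {k : Type} [Field k] [CharZero k] (r l : ℕ) (hl : 1 ≤ l)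
    (ψ : ℕ → MvPolynomial (Fin r) k) (j : ℕ) (hj : j ≤ l - 1) :
    ∑ a ∈ Finset.Icc j (l - 1),
        MvPolynomial.C ((-1 : k) ^ (a + j) * (((a - j).factorial : k))⁻¹ *
            (a.factorial : k) * (((2 * l - 1).choose a : k))⁻¹) *
          fA k r l (Fpsi k r l ψ) a
      = piPsi k r l ψ j := by
  have hc : ∀ a ∈ Finset.Icc j (l - 1),
      MvPolynomial.C ((-1 : k) ^ (a + j) * (((a - j).factorial : k))⁻¹ *
            (a.factorial : k) * (((2 * l - 1).choose a : k))⁻¹) *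
          fA k r l (Fpsi k r l ψ) a
        = MvPolynomial.C (((-1 : k) ^ (a + j) * (((a - j).factorial : k))⁻¹ *
              (a.factorial : k) * (((2 * l - 1).choose a : k))⁻¹) *
              ((((2*l-1).choose a : k))^2)) * gTop k r ^ (2*l-1)
          + ∑ i ∈ range l,
            MvPolynomial.C (((-1 : k) ^ (a + j) * (((a - j).factorial : k))⁻¹ *
              (a.factorial : k) * (((2 * l - 1).choose a : k))⁻¹) *
              (((2*l-1).choose a : k) * (i.choose a : k) * ((i.factorial : k))⁻¹)) *
              tilde k r (ψ i) * gTop k r ^ i := by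
    intro a ha
    rw [Finset.mem_Icc] at ha
    rw [fA_Fpsi r l hl ψ a (by omega), mul_add, Finset.mul_sum]
    congr 1
    · conv_rhs => rw [map_mul]
      ring
    · refine Finset.sum_congr rfl fun i _ => ?_
      conv_rhs => rw [map_mul]
      ring
  rw [Finset.sum_congr rfl hc, Finset.sum_add_distrib, ← Finset.sum_mul, ← map_sum,
    K1 l j hl hj, Finset.sum_comm]
  have h2 : ∀ i ∈ range l,
      (∑ a ∈ Finset.Icc j (l-1),
          MvPolynomial.C (((-1 : k) ^ (a + j) * (((a - j).factorial : k))⁻¹ *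
            (a.factorial : k) * (((2 * l - 1).choose a : k))⁻¹) *
            (((2*l-1).choose a : k) * (i.choose a : k) * ((i.factorial : k))⁻¹)) *
            tilde k r (ψ i) * gTop k r ^ i)
        = (if i = j then tilde k r (ψ i) * gTop k r ^ i else 0) := by
    intro i hi
    rw [Finset.mem_range] at hi
    rw [← Finset.sum_mul, ← Finset.sum_mul, ← map_sum, K2 l j i hl hj hi]
    split_ifs
    · rw [map_one, one_mul]
    · rw [map_zero, zero_mul, zero_mul]
  rw [Finset.sum_congr rfl h2,
    Finset.sum_ite_eq' (range l) j (fun i => tilde k r (ψ i) * gTop k r ^ i),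
    if_pos (Finset.mem_range.mpr (by omega : j < l))]
  rfl
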